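/- Let X_1, …, X_n (n ≥ 2) be random variables on a probability space, let θ = (θ_1, …, θ_n) be a weight vector in the open probability simplex Δ_n, and let I = (I_1, …, I_n) be a random vector, independent of (X_1, …, X_n), taking values in the standard basis vectors of ℝ^n with P(I_i = 1) = θ_i for each i. Then the diversified portfolio is smaller than the concentrated portfolio in convex order: for every convex function c : ℝ → ℝ such that both c(θ_1 X_1 + ⋯ + θ_n X_n) and c(I_1 X_1 + ⋯ + I_n X_n) are integrable, E[c(θ_1 X_1 + ⋯ + θ_n X_n)] ≤ E[c(I_1 X_1 + ⋯ + I_n X_n)]. -/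

import Mathlib

open MeasureTheory ProbabilityTheory

/-- The diversified portfolio is smaller than the concentrated portfolio
in convex order. -/
theorem diversified_le_concentrated_convex_order
    {Ω : Type*} [MeasurableSpace Ω] (P : Measure Ω) [IsProbabilityMeasure P]
    (n : ℕ) (hn : 2 ≤ n)
    (X : Fin n → Ω → ℝ) (hXmeas : ∀ i, Measurable (X i))
    (θ : Fin n → ℝ) (hθ : ∀ i, θ i ∈ Set.Ioo (0 : ℝ) 1) (hθsum : ∑ i, θ i = 1)
    (I : Fin n → Ω → ℝ) (hImeas : ∀ i, Measurable (I i))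
    (hIbasis : ∀ ω, ∃ i, I i ω = 1 ∧ ∀ j, j ≠ i → I j ω = 0)
    (hIprob : ∀ i, P {ω | I i ω = 1} = ENNReal.ofReal (θ i))
    (hIndep : IndepFun (fun ω i => I i ω) (fun ω i => X i ω) P)
    (c : ℝ → ℝ) (hc : ConvexOn ℝ Set.univ c)
    (hint_div : Integrable (fun ω => c (∑ i, θ i * X i ω)) P)
    (hint_con : Integrable (fun ω => c (∑ i, I i ω * X i ω)) P) :
    ∫ ω, c (∑ i, θ i * X i ω) ∂P ≤ ∫ ω, c (∑ i, I i ω * X i ω) ∂P := by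
  have hccont : Continuous c := by
    exact continuousOn_univ.mp (hc.continuousOn isOpen_univ)
  have hcmeas : Measurable c := hccont.measurable
  -- indicator functions
  set e : Fin n → Ω → ℝ := fun i ω => if I i ω = 1 then (1 : ℝ) else 0 with he
  have hset : ∀ i, MeasurableSet {ω | I i ω = 1} := fun i =>
    (hImeas i) (measurableSet_singleton 1)
  have he_eq : ∀ i, e i = Set.indicator {ω | I i ω = 1} (fun _ => (1 : ℝ)) := by
    intro i; funext ω; simp [he, Set.indicator_apply, Set.mem_setOf_eq]
  -- pointwise structure
  have hsum_con : ∀ ω, ∑ j, I j ω * X j ω = X (Classical.choose (hIbasis ω)) ω := by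
    intro ω
    obtain ⟨h1, h0⟩ := Classical.choose_spec (hIbasis ω)
    rw [Finset.sum_eq_single (Classical.choose (hIbasis ω))]
    · rw [h1, one_mul]
    · intro j _ hj; rw [h0 j hj, zero_mul]
    · intro h; exact absurd (Finset.mem_univ _) h
  have hg_eq : ∀ ω, ∑ i, e i ω * c (X i ω) = c (∑ j, I j ω * X j ω) := by
    intro ω
    obtain ⟨h1, h0⟩ := Classical.choose_spec (hIbasis ω)
    rw [hsum_con ω, Finset.sum_eq_single (Classical.choose (hIbasis ω))]
    · simp [he, h1]
    · intro j _ hj; simp [he, h0 j hj]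
    · intro h; exact absurd (Finset.mem_univ _) h
  -- each term e i * c(X i) is integrable
  have hg_int : ∀ i, Integrable (fun ω => e i ω * c (X i ω)) P := by
    intro i
    have : (fun ω => e i ω * c (X i ω)) =
        Set.indicator {ω | I i ω = 1} (fun ω => c (∑ j, I j ω * X j ω)) := by
      funext ω
      by_cases h : I i ω = 1
      · obtain ⟨h1, h0⟩ := Classical.choose_spec (hIbasis ω)
        have hik : Classical.choose (hIbasis ω) = i := by
          by_contra hne
          exact one_ne_zero (h ▸ h0 i (fun hh => hne hh.symm))
        simp [he, h, Set.indicator_of_mem (show ω ∈ {ω | I i ω = 1} from h), hsum_con ω, hik]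
      · simp [he, h, Set.indicator_of_notMem (show ω ∉ {ω | I i ω = 1} from h)]
    rw [this]
    exact hint_con.indicator (hset i)
  -- independence of e i and c ∘ X i
  have hindep : ∀ i, IndepFun (e i) (fun ω => c (X i ω)) P := by
    intro i
    have hφ : Measurable (fun v : Fin n → ℝ => if v i = 1 then (1 : ℝ) else 0) := by
      exact Measurable.ite ((measurable_pi_apply i) (measurableSet_singleton 1))
        measurable_const measurable_const
    have hψ : Measurable (fun v : Fin n → ℝ => c (v i)) :=
      hcmeas.comp (measurable_pi_apply i)
    exact hIndep.comp hφ hψ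
  -- e i integrable, integral θ i
  have he_int : ∀ i, Integrable (e i) P := by
    intro i
    rw [he_eq i]
    exact (integrable_const (1 : ℝ)).indicator (hset i)
  have he_integral : ∀ i, ∫ ω, e i ω ∂P = θ i := by
    intro i
    rw [he_eq i]
    rw [integral_indicator_const (1 : ℝ) (hset i), measureReal_def, hIprob i, smul_eq_mul, mul_one,
      ENNReal.toReal_ofReal (hθ i).1.le]
  -- e i is not a.e. zero
  have he_ne : ∀ i, ¬ e i =ᵐ[P] 0 := by
    intro i h
    have : ∫ ω, e i ω ∂P = 0 := by
      rw [integral_congr_ae h]; simp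
    rw [he_integral i] at this
    exact absurd this (ne_of_gt (hθ i).1)
  -- c(X i) integrable
  have hcX_int : ∀ i, Integrable (fun ω => c (X i ω)) P := by
    intro i
    exact (hindep i).integrable_right_of_integrable_op (fun x y : ℝ => x * y) 1 one_ne_zero
      (fun x y => by rw [ENNReal.coe_one, one_mul, enorm_mul]) (hg_int i)
      (he_int i).aestronglyMeasurable
      (hcmeas.comp (hXmeas i)).aestronglyMeasurable (he_ne i)
  -- factorization
  have hfac : ∀ i, ∫ ω, e i ω * c (X i ω) ∂P = θ i * ∫ ω, c (X i ω) ∂P := by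
    intro i
    have := (hindep i).integral_fun_mul_eq_mul_integral (he_int i).aestronglyMeasurable
      (hcX_int i).aestronglyMeasurable
    simpa [he_integral i] using this
  -- pointwise Jensen
  have hjensen : ∀ ω, c (∑ i, θ i * X i ω) ≤ ∑ i, θ i * c (X i ω) := by
    intro ω
    have := hc.map_sum_le (t := Finset.univ) (w := θ) (p := fun i => X i ω)
      (fun i _ => (hθ i).1.le) hθsum (fun i _ => Set.mem_univ _)
    simpa [smul_eq_mul] using this
  have hsum_int : Integrable (fun ω => ∑ i, θ i * c (X i ω)) P := by
    apply integrable_finset_sum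
    intro i _
    exact (hcX_int i).const_mul (θ i)
  calc ∫ ω, c (∑ i, θ i * X i ω) ∂P
      ≤ ∫ ω, ∑ i, θ i * c (X i ω) ∂P :=
        integral_mono hint_div hsum_int (fun ω => hjensen ω)
    _ = ∑ i, θ i * ∫ ω, c (X i ω) ∂P := by
        rw [integral_finset_sum _ (fun i _ => (hcX_int i).const_mul (θ i))]
        exact Finset.sum_congr rfl (fun i _ => integral_const_mul _ _)
    _ = ∑ i, ∫ ω, e i ω * c (X i ω) ∂P :=
        Finset.sum_congr rfl (fun i _ => (hfac i).symm)
    _ = ∫ ω, ∑ i, e i ω * c (X i ω) ∂P :=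
        (integral_finset_sum _ (fun i _ => hg_int i)).symm
    _ = ∫ ω, c (∑ i, I i ω * X i ω) ∂P :=
        integral_congr_ae (Filter.Eventually.of_forall (fun ω => hg_eq ω))
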